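/- Let β > 0, L ≥ 1, and P₁, …, P_L > 0. Let mF_β(fn, fp) = (1+β²)·Σ_k (P_k − fn_k) / ( (1+β²)·Σ_k P_k + Σ_k (fp_k − fn_k) ) on the domain of (fn, fp) ∈ ℝ^L × ℝ^L with 0 ≤ fn_k ≤ P_k and fp_k ≥ 0 for all k. Then for all (fn, fp) and (fn', fp') in this domain with mF_β(fn', fp') > mF_β(fn, fp), setting t' = mF_β(fn', fp'), one has mF_β(fn', fp') − mF_β(fn, fp) ≤ (1/(β²·Σ_k P_k)) · [ (1+β² − t')·Σ_k (fn_k − fn'_k) + t'·Σ_k (fp_k − fp'_k) ]. -/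
import Mathlib


/-- The multilabel micro-`F_β`-measure with marginal label probabilities `P`,
false-negative probabilities `fn` and false-positive probabilities `fp`,
for labels `k ∈ {1, …, L}`. -/
noncomputable def multilabelMicroFbeta (β : ℝ) (L : ℕ) (P fn fp : ℕ → ℝ) : ℝ :=
  (1 + β ^ 2) * (∑ k ∈ Finset.Icc 1 L, (P k - fn k)) /
    ((1 + β ^ 2) * (∑ k ∈ Finset.Icc 1 L, P k) + ∑ k ∈ Finset.Icc 1 L, (fp k - fn k))

/-- Discretization-factor bound for the multilabel micro-`F_β`-measure: for error
profiles `(fn, fp)` and `(fn', fp')` in the domain with `mF_β(fn',fp') > mF_β(fn,fp)`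
and `t' = mF_β(fn',fp')`, the difference is at most
`(1/(β²ΣₖPₖ))·[(1+β²−t')Σₖ(fnₖ−fn'ₖ) + t'Σₖ(fpₖ−fp'ₖ)]`. -/
theorem multilabel_micro_Fbeta_discretization_bound (β : ℝ) (hβ : 0 < β)
    (L : ℕ) (hL : 1 ≤ L) (P : ℕ → ℝ) (hP : ∀ k ∈ Finset.Icc 1 L, 0 < P k)
    (fn fp fn' fp' : ℕ → ℝ)
    (hfn : ∀ k ∈ Finset.Icc 1 L, 0 ≤ fn k ∧ fn k ≤ P k)
    (hfp : ∀ k ∈ Finset.Icc 1 L, 0 ≤ fp k)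
    (hfn' : ∀ k ∈ Finset.Icc 1 L, 0 ≤ fn' k ∧ fn' k ≤ P k)
    (hfp' : ∀ k ∈ Finset.Icc 1 L, 0 ≤ fp' k)
    (hlt : multilabelMicroFbeta β L P fn' fp' > multilabelMicroFbeta β L P fn fp) :
    multilabelMicroFbeta β L P fn' fp' - multilabelMicroFbeta β L P fn fp ≤
      (1 / (β ^ 2 * ∑ k ∈ Finset.Icc 1 L, P k)) *
        ((1 + β ^ 2 - multilabelMicroFbeta β L P fn' fp') *
            (∑ k ∈ Finset.Icc 1 L, (fn k - fn' k)) +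
          multilabelMicroFbeta β L P fn' fp' *
            (∑ k ∈ Finset.Icc 1 L, (fp k - fp' k))) := by
  have hne : (Finset.Icc 1 L).Nonempty := ⟨1, by simp [hL]⟩
  have hSpos : 0 < ∑ k ∈ Finset.Icc 1 L, P k := Finset.sum_pos hP hne
  have hAle : (∑ k ∈ Finset.Icc 1 L, fn k) ≤ ∑ k ∈ Finset.Icc 1 L, P k :=
    Finset.sum_le_sum (fun k hk => (hfn k hk).2)
  have hA'le : (∑ k ∈ Finset.Icc 1 L, fn' k) ≤ ∑ k ∈ Finset.Icc 1 L, P k :=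
    Finset.sum_le_sum (fun k hk => (hfn' k hk).2)
  have hBpos : 0 ≤ ∑ k ∈ Finset.Icc 1 L, fp k := Finset.sum_nonneg (fun k hk => hfp k hk)
  have hB'pos : 0 ≤ ∑ k ∈ Finset.Icc 1 L, fp' k := Finset.sum_nonneg (fun k hk => hfp' k hk)
  have hβ2 : 0 < β ^ 2 := by positivity
  -- abbreviate the aggregate sums
  obtain ⟨S, hS⟩ : ∃ S, ∑ k ∈ Finset.Icc 1 L, P k = S := ⟨_, rfl⟩
  obtain ⟨A, hA⟩ : ∃ A, ∑ k ∈ Finset.Icc 1 L, fn k = A := ⟨_, rfl⟩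
  obtain ⟨B, hB⟩ : ∃ B, ∑ k ∈ Finset.Icc 1 L, fp k = B := ⟨_, rfl⟩
  obtain ⟨A', hA'⟩ : ∃ A', ∑ k ∈ Finset.Icc 1 L, fn' k = A' := ⟨_, rfl⟩
  obtain ⟨B', hB'⟩ : ∃ B', ∑ k ∈ Finset.Icc 1 L, fp' k = B' := ⟨_, rfl⟩
  rw [hS] at hSpos hAle hA'le
  rw [hA] at hAle
  rw [hB] at hBpos
  rw [hA'] at hA'le
  rw [hB'] at hB'pos
  have hsub : ∑ k ∈ Finset.Icc 1 L, (fp k - fn k) = B - A := by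
    rw [Finset.sum_sub_distrib, hA, hB]
  have hsub' : ∑ k ∈ Finset.Icc 1 L, (fp' k - fn' k) = B' - A' := by
    rw [Finset.sum_sub_distrib, hA', hB']
  have hsubP : ∑ k ∈ Finset.Icc 1 L, (P k - fn k) = S - A := by
    rw [Finset.sum_sub_distrib, hS, hA]
  have hsubP' : ∑ k ∈ Finset.Icc 1 L, (P k - fn' k) = S - A' := by
    rw [Finset.sum_sub_distrib, hS, hA']
  have hsumfn : ∑ k ∈ Finset.Icc 1 L, (fn k - fn' k) = A - A' := by
    rw [Finset.sum_sub_distrib, hA, hA']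
  have hsumfp : ∑ k ∈ Finset.Icc 1 L, (fp k - fp' k) = B - B' := by
    rw [Finset.sum_sub_distrib, hB, hB']
  have hDge : β ^ 2 * S ≤ (1 + β ^ 2) * S + (B - A) := by nlinarith
  have hD'ge : β ^ 2 * S ≤ (1 + β ^ 2) * S + (B' - A') := by nlinarith
  have hDpos : 0 < (1 + β ^ 2) * S + (B - A) := lt_of_lt_of_le (by positivity) hDge
  have hD'pos : 0 < (1 + β ^ 2) * S + (B' - A') := lt_of_lt_of_le (by positivity) hD'ge
  have hF : multilabelMicroFbeta β L P fn fp
      = (1 + β ^ 2) * (S - A) / ((1 + β ^ 2) * S + (B - A)) := by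
    rw [multilabelMicroFbeta, hsubP, hsub, hS]
  have hF' : multilabelMicroFbeta β L P fn' fp'
      = (1 + β ^ 2) * (S - A') / ((1 + β ^ 2) * S + (B' - A')) := by
    rw [multilabelMicroFbeta, hsubP', hsub', hS]
  rw [hF, hF'] at hlt ⊢
  rw [hsumfn, hsumfp, hS]
  set F := (1 + β ^ 2) * (S - A) / ((1 + β ^ 2) * S + (B - A)) with hFdef
  set F' := (1 + β ^ 2) * (S - A') / ((1 + β ^ 2) * S + (B' - A')) with hF'def
  have hN : F * ((1 + β ^ 2) * S + (B - A)) = (1 + β ^ 2) * (S - A) :=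
    div_mul_cancel₀ _ (ne_of_gt hDpos)
  have hN' : F' * ((1 + β ^ 2) * S + (B' - A')) = (1 + β ^ 2) * (S - A') :=
    div_mul_cancel₀ _ (ne_of_gt hD'pos)
  have hKeq : F' - F
      = ((1 + β ^ 2 - F') * (A - A') + F' * (B - B')) / ((1 + β ^ 2) * S + (B - A)) := by
    rw [eq_div_iff (ne_of_gt hDpos)]
    linear_combination hN' - hN
  have hKpos : 0 < (1 + β ^ 2 - F') * (A - A') + F' * (B - B') := by
    have h1 : 0 < ((1 + β ^ 2 - F') * (A - A') + F' * (B - B'))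
        / ((1 + β ^ 2) * S + (B - A)) := hKeq ▸ sub_pos.mpr hlt
    by_contra h
    push_neg at h
    have := div_nonpos_of_nonpos_of_nonneg h (le_of_lt hDpos)
    linarith
  rw [hKeq, one_div, ← div_eq_inv_mul]
  exact div_le_div_of_nonneg_left (le_of_lt hKpos) (by positivity) hDge
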